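/- arXiv:2407.15201 — 2 statements merged into one kernel-verified Lean document; each statement's English description precedes it below -/
import Mathlib

section
/- For every natural number k and real q ≠ 1, S_q(2^k) = q · (1 − q^k)/(1 − q) · 2^{k−1}, i.e. (1−q)·S_q(2^k)·2 = q·(1 − q^k)·2^k. -/
open scoped BigOperators

/-- distance from `x` to the nearest integer -/
noncomputable def tau (x : ℝ) : ℝ := |x - round x|

/-- q-weighted binary digit sum: `s_q(n) = Σ ω_i q^(i+1)` -/
noncomputable def sdigq (q : ℝ) (n : ℕ) : ℝ :=
  ∑ i ∈ Finset.range n, if n.testBit i then q ^ (i + 1) else 0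

/-- `S_q(n) = Σ_{k<n} s_q(k)` -/
noncomputable def Sdigq (q : ℝ) (n : ℕ) : ℝ := ∑ k ∈ Finset.range n, sdigq q k

/-- Takagi–Landsberg function -/
noncomputable def Ta (a x : ℝ) : ℝ := ∑' n : ℕ, a ^ n * tau (2 ^ n * x)

lemma sumBits_ext (q : ℝ) (n m m' : ℕ) (h : n < 2 ^ m) (hmm : m ≤ m') :
    (∑ i ∈ Finset.range m', if n.testBit i then q ^ (i + 1) else 0)
      = ∑ i ∈ Finset.range m, if n.testBit i then q ^ (i + 1) else 0 := by
  symm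
  apply Finset.sum_subset (Finset.range_subset_range.2 hmm)
  intro i _ hi
  simp only [Finset.mem_range, not_lt] at hi
  rw [Nat.testBit_lt_two_pow (h.trans_le (Nat.pow_le_pow_right (by norm_num) hi))]
  simp

lemma sdigq_eq (q : ℝ) (n m : ℕ) (h : n < 2 ^ m) :
    sdigq q n = ∑ i ∈ Finset.range m, if n.testBit i then q ^ (i + 1) else 0 := by
  unfold sdigq
  rcases le_total n m with hnm | hnm
  · rw [sumBits_ext q n n m (Nat.lt_two_pow_self (n := n)) hnm]
  · rw [sumBits_ext q n m n h hnm]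

lemma sdigq_add_pow (q : ℝ) (k n : ℕ) (hn : n < 2 ^ k) :
    sdigq q (2 ^ k + n) = q ^ (k + 1) + sdigq q n := by
  have h1 : 2 ^ k + n < 2 ^ (k + 1) := by rw [pow_succ]; omega
  have hbk : n.testBit k = false := Nat.testBit_lt_two_pow hn
  rw [sdigq_eq q (2 ^ k + n) (k + 1) h1,
    sdigq_eq q n (k + 1) (hn.trans (Nat.pow_lt_pow_succ (by norm_num))),
    Finset.sum_range_succ, Finset.sum_range_succ]
  have hbit : (2 ^ k + n).testBit k = true := by
    rw [Nat.testBit_two_pow_add_eq, hbk]; rfl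
  rw [hbit, hbk]
  have : ∀ i ∈ Finset.range k,
      (if (2 ^ k + n).testBit i then q ^ (i + 1) else 0)
        = if n.testBit i then q ^ (i + 1) else 0 := by
    intro i hi
    rw [Nat.testBit_two_pow_add_gt (Finset.mem_range.1 hi)]
  rw [Finset.sum_congr rfl this]
  simp [add_comm]

theorem Sq_pow_two (q : ℝ) (hq : q ≠ 1) (k : ℕ) :
    (1 - q) * Sdigq q (2 ^ k) * 2 = q * (1 - q ^ k) * 2 ^ k := by
  induction k with
  | zero => simp [Sdigq, sdigq]
  | succ k ih =>
      have key : Sdigq q (2 ^ (k + 1)) = 2 * Sdigq q (2 ^ k) + 2 ^ k * q ^ (k + 1) := by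
        have h2 : 2 ^ (k + 1) = 2 ^ k + 2 ^ k := by rw [pow_succ]; ring
        unfold Sdigq
        rw [h2, Finset.sum_range_add]
        have : ∀ i ∈ Finset.range (2 ^ k), sdigq q (2 ^ k + i) = q ^ (k + 1) + sdigq q i := by
          intro i hi
          exact sdigq_add_pow q k i (Finset.mem_range.1 hi)
        rw [Finset.sum_congr rfl this, Finset.sum_add_distrib, Finset.sum_const,
          Finset.card_range]
        push_cast
        ring
      rw [key]
      push_cast [pow_succ]
      linear_combination 2 * ih
end

section
/- For any real q ≠ 1 and any positive integer n with k = ⌊log₂ n⌋, (1/n)·S_q(n) = (q/2)·(1 − q^{k+1})/(1 − q) − (1/(2n))·Σ_{i=1}^{k+1} (2q)^i · τ(n/2^i), where τ(x) = dist(x, ℤ). -/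
open scoped BigOperators

private lemma testBit_iff (k i : ℕ) : k.testBit i = true ↔ 2 ^ i ≤ k % 2 ^ (i + 1) := by
  rw [Nat.testBit_eq_decide_div_mod_eq, decide_eq_true_iff]
  have hp : 0 < 2 ^ i := pow_pos (by norm_num) i
  have h : k % 2 ^ (i + 1) / 2 ^ i = k / 2 ^ i % 2 := by
    rw [pow_succ, Nat.mod_mul_right_div_self]
  rw [← h]
  have h2 : k % 2 ^ (i + 1) < 2 ^ i * 2 := by
    rw [← pow_succ]; exact Nat.mod_lt _ (by positivity)
  rcases Nat.lt_or_ge (k % 2 ^ (i + 1)) (2 ^ i) with hc | hc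
  · rw [Nat.div_eq_of_lt hc]
    exact iff_of_false (by norm_num) (not_le.mpr hc)
  · have hone : k % 2 ^ (i + 1) / 2 ^ i = 1 := by
      have h1 : 1 ≤ k % 2 ^ (i + 1) / 2 ^ i :=
        (Nat.le_div_iff_mul_le hp).mpr (by omega)
      have h2' : k % 2 ^ (i + 1) / 2 ^ i < 2 :=
        (Nat.div_lt_iff_lt_mul hp).mpr (by omega)
      omega
    rw [hone]
    exact iff_of_true rfl hc

private lemma count_nat (i : ℕ) : ∀ n : ℕ,
    2 * (∑ k ∈ Finset.range n, if k.testBit i then 1 else 0) +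
      min (n % 2 ^ (i + 1)) (2 ^ (i + 1) - n % 2 ^ (i + 1)) = n := by
  intro n
  induction n with
  | zero => simp
  | succ n ih =>
    rw [Finset.sum_range_succ]
    have hp : 0 < 2 ^ i := pow_pos (by norm_num) i
    have hM : (2 : ℕ) ^ (i + 1) = 2 ^ i + 2 ^ i := by rw [pow_succ]; ring
    have hr : n % 2 ^ (i + 1) < 2 ^ (i + 1) := Nat.mod_lt _ (by positivity)
    have hr' : (n % 2 ^ (i + 1) + 1 = 2 ^ (i + 1) ∧ (n + 1) % 2 ^ (i + 1) = 0) ∨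
        (n % 2 ^ (i + 1) + 1 < 2 ^ (i + 1) ∧
          (n + 1) % 2 ^ (i + 1) = n % 2 ^ (i + 1) + 1) := by
      rcases eq_or_lt_of_le (Nat.succ_le_of_lt hr) with h | h
      · left
        refine ⟨h, ?_⟩
        have hd := Nat.div_add_mod n (2 ^ (i + 1))
        have hrep : n + 1 = 2 ^ (i + 1) * (n / 2 ^ (i + 1) + 1) := by
          rw [Nat.mul_add, Nat.mul_one]; omega
        rw [hrep, Nat.mul_mod_right]
      · right
        refine ⟨h, ?_⟩
        have hd := Nat.div_add_mod n (2 ^ (i + 1))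
        have hrep : n + 1 = 2 ^ (i + 1) * (n / 2 ^ (i + 1)) + (n % 2 ^ (i + 1) + 1) := by
          omega
        rw [hrep, Nat.mul_add_mod]
        exact Nat.mod_eq_of_lt h
    have hb := testBit_iff n i
    by_cases hbit : n.testBit i = true
    · have h1 : 2 ^ i ≤ n % 2 ^ (i + 1) := hb.mp hbit
      rw [if_pos hbit]
      omega
    · have h1 : ¬ 2 ^ i ≤ n % 2 ^ (i + 1) := fun h => hbit (hb.mpr h)
      rw [if_neg hbit]
      omega

private lemma count_real (i n : ℕ) :
    (∑ k ∈ Finset.range n, if k.testBit i then (1 : ℝ) else 0) =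
      (n : ℝ) / 2 - 2 ^ i * tau ((n : ℝ) / 2 ^ (i + 1)) := by
  have h := count_nat i n
  have key : ((n : ℝ)) / (2 : ℝ) ^ (i + 1) = (n : ℝ) / ((2 ^ (i + 1) : ℕ) : ℝ) := by
    push_cast; ring
  have htau : tau ((n : ℝ) / 2 ^ (i + 1)) =
      ((min (n % 2 ^ (i + 1)) (2 ^ (i + 1) - n % 2 ^ (i + 1)) : ℕ) : ℝ) /
        ((2 ^ (i + 1) : ℕ) : ℝ) := by
    rw [tau, key, abs_sub_round_div_natCast_eq]
  have hsum : (∑ k ∈ Finset.range n, if k.testBit i then (1 : ℝ) else 0) =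
      ((∑ k ∈ Finset.range n, if k.testBit i then 1 else 0 : ℕ) : ℝ) := by
    push_cast
    rfl
  have hcast : 2 * ((∑ k ∈ Finset.range n, if k.testBit i then 1 else 0 : ℕ) : ℝ) +
      ((min (n % 2 ^ (i + 1)) (2 ^ (i + 1) - n % 2 ^ (i + 1)) : ℕ) : ℝ) = (n : ℝ) := by
    exact_mod_cast congrArg (Nat.cast : ℕ → ℝ) h
  have hM : ((2 ^ (i + 1) : ℕ) : ℝ) = (2 : ℝ) ^ (i + 1) := by push_cast; ring
  have hMpos : (0 : ℝ) < (2 : ℝ) ^ (i + 1) := by positivity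
  rw [hsum, htau, hM]
  have hpow : (2 : ℝ) ^ i *
      (((min (n % 2 ^ (i + 1)) (2 ^ (i + 1) - n % 2 ^ (i + 1)) : ℕ) : ℝ) / (2 : ℝ) ^ (i + 1)) =
      ((min (n % 2 ^ (i + 1)) (2 ^ (i + 1) - n % 2 ^ (i + 1)) : ℕ) : ℝ) / 2 := by
    rw [pow_succ]
    field_simp
    ring
  rw [hpow]
  linarith

private lemma Sdigq_eq (q : ℝ) (n : ℕ) (hn : 0 < n) :
    Sdigq q n = ∑ i ∈ Finset.range (Nat.log 2 n + 1),
      q ^ (i + 1) * ((n : ℝ) / 2 - 2 ^ i * tau ((n : ℝ) / 2 ^ (i + 1))) := by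
  have hKn : Nat.log 2 n + 1 ≤ n := by
    have h2 : Nat.log 2 n < 2 ^ (Nat.log 2 n) := Nat.lt_two_pow_self
    have h3 : 2 ^ Nat.log 2 n ≤ n := Nat.pow_log_le_self 2 hn.ne'
    omega
  unfold Sdigq sdigq
  have step1 : ∀ k ∈ Finset.range n,
      (∑ i ∈ Finset.range k, if k.testBit i then q ^ (i + 1) else 0)
        = ∑ i ∈ Finset.range n, if k.testBit i then q ^ (i + 1) else 0 := by
    intro k hk
    apply Finset.sum_subset (Finset.range_subset_range.mpr (Finset.mem_range.mp hk).le)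
    intro i _ hi
    have hki : k ≤ i := le_of_not_gt (fun h => hi (Finset.mem_range.mpr h))
    have : k.testBit i = false :=
      Nat.testBit_lt_two_pow
        (lt_of_lt_of_le (Nat.lt_two_pow_self (n := k)) (Nat.pow_le_pow_right (by norm_num) hki))
    rw [this]
    simp
  rw [Finset.sum_congr rfl step1, Finset.sum_comm]
  have step2 : ∀ i, (∑ k ∈ Finset.range n, if k.testBit i then q ^ (i + 1) else 0)
      = q ^ (i + 1) * ∑ k ∈ Finset.range n, if k.testBit i then (1 : ℝ) else 0 := by
    intro i
    rw [Finset.mul_sum]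
    apply Finset.sum_congr rfl
    intro k _
    by_cases h : k.testBit i <;> simp [h]
  rw [Finset.sum_congr rfl (fun i _ => step2 i)]
  rw [← Finset.sum_subset (Finset.range_subset_range.mpr hKn) (fun i _ hi => ?_)]
  · exact Finset.sum_congr rfl fun i _ => by rw [count_real]
  · have hik : Nat.log 2 n + 1 ≤ i := le_of_not_gt (fun h => hi (Finset.mem_range.mpr h))
    have hz : ∀ k ∈ Finset.range n, (if k.testBit i then (1 : ℝ) else 0) = 0 := by
      intro k hk
      have : k.testBit i = false := by
        apply Nat.testBit_lt_two_pow
        calc k < n := Finset.mem_range.mp hk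
          _ < 2 ^ (Nat.log 2 n + 1) := Nat.lt_pow_succ_log_self (by norm_num) n
          _ ≤ 2 ^ i := Nat.pow_le_pow_right (by norm_num) hik
      rw [this]
      simp
    rw [Finset.sum_eq_zero hz, mul_zero]

theorem Sq_dyadic_formula (q : ℝ) (hq : q ≠ 1) (n : ℕ) (hn : 0 < n) :
    (1 / (n : ℝ)) * Sdigq q n =
      (q / 2) * (1 - q ^ (Nat.log 2 n + 1)) / (1 - q)
        - (1 / (2 * (n : ℝ))) *
          ∑ i ∈ Finset.Icc 1 (Nat.log 2 n + 1), (2 * q) ^ i * tau ((n : ℝ) / 2 ^ i) := by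
  set K := Nat.log 2 n with hK
  have hn' : (n : ℝ) ≠ 0 := Nat.cast_ne_zero.mpr hn.ne'
  have h1q : (1 : ℝ) - q ≠ 0 := sub_ne_zero.mpr (Ne.symm hq)
  rw [Sdigq_eq q n hn]
  have hgeom : ∑ i ∈ Finset.range (K + 1), q ^ (i + 1) = q * (1 - q ^ (K + 1)) / (1 - q) := by
    have hg := geom_sum_eq hq (K + 1)
    have : ∑ i ∈ Finset.range (K + 1), q ^ (i + 1) =
        q * ∑ i ∈ Finset.range (K + 1), q ^ i := by
      rw [Finset.mul_sum]
      exact Finset.sum_congr rfl fun i _ => by ring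
    have hq1 : q - 1 ≠ 0 := sub_ne_zero.mpr hq
    rw [this, hg]
    field_simp
    ring
  have hre : ∑ i ∈ Finset.Icc 1 (K + 1), (2 * q) ^ i * tau ((n : ℝ) / 2 ^ i)
      = ∑ i ∈ Finset.range (K + 1), (2 * q) ^ (i + 1) * tau ((n : ℝ) / 2 ^ (i + 1)) := by
    rw [← Finset.Ico_add_one_right_eq_Icc, Finset.sum_Ico_eq_sum_range]
    apply Finset.sum_congr (by norm_num)
    intro i _
    rw [add_comm 1 i]
  have hsplit : ∑ i ∈ Finset.range (K + 1),
      q ^ (i + 1) * ((n : ℝ) / 2 - 2 ^ i * tau ((n : ℝ) / 2 ^ (i + 1)))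
      = (n : ℝ) / 2 * (∑ i ∈ Finset.range (K + 1), q ^ (i + 1))
        - (1 / 2) * ∑ i ∈ Finset.range (K + 1), (2 * q) ^ (i + 1) * tau ((n : ℝ) / 2 ^ (i + 1)) := by
    rw [Finset.mul_sum, Finset.mul_sum, ← Finset.sum_sub_distrib]
    apply Finset.sum_congr rfl
    intro i _
    rw [mul_pow]
    ring
  rw [hsplit, hgeom, hre]
  field_simp
end
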